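/- Define g : (0,1) × (0,∞) → ℝ³ by g(x₁, y₁) = χ_{4,2}((x₁), (y₁, 1)) / ‖χ_{4,2}((x₁), (y₁, 1))‖₁, the ℓ₁-normalized coalescence vector of the two-epoch demography with break parameter x₁ and population sizes (y₁, 1). Then g is injective on the set (0,1) × ((0,∞) \ {1}), i.e., the map fails to be one-to-one only along y₁ = 1 (where g is constant equal to (2/3, 2/9, 1/9)). -/
import Mathlib


/-- The (unnormalized) coalescence vector `χ_{4,2}((x₁), (y₁, 1))` of the two-epoch
demography with break parameter `x₁` and population sizes `(y₁, 1)`: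
`(y₁(1−x₁) + x₁, (y₁(1−x₁³) + x₁³)/3, (y₁(1−x₁⁶) + x₁⁶)/6)`. -/
noncomputable def coalVec (x₁ y₁ : ℝ) : Fin 3 → ℝ :=
  ![y₁ * (1 - x₁) + x₁, (y₁ * (1 - x₁ ^ 3) + x₁ ^ 3) / 3, (y₁ * (1 - x₁ ^ 6) + x₁ ^ 6) / 6]

/-- `g(x₁, y₁)`: the `ℓ₁`-normalization of `χ_{4,2}((x₁), (y₁, 1))`. -/
noncomputable def g (x₁ y₁ : ℝ) : Fin 3 → ℝ :=
  (coalVec x₁ y₁ 0 + coalVec x₁ y₁ 1 + coalVec x₁ y₁ 2)⁻¹ • coalVec x₁ y₁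

lemma sum_pos' {u v : ℝ} (hu0 : 0 < u) (hu1 : u < 1) (hv0 : 0 < v) :
    0 < v * (1 - u) + u + (v * (1 - u ^ 3) + u ^ 3) / 3 + (v * (1 - u ^ 6) + u ^ 6) / 6 := by
  have h3 : u ^ 3 < 1 := pow_lt_one₀ hu0.le hu1 (by norm_num)
  have h6 : u ^ 6 < 1 := pow_lt_one₀ hu0.le hu1 (by norm_num)
  have := mul_pos hv0 (sub_pos.mpr hu1)
  have := mul_pos hv0 (sub_pos.mpr h3)
  have := mul_pos hv0 (sub_pos.mpr h6)
  have := pow_pos hu0 3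
  have := pow_pos hu0 6
  linarith


/-- `g` is injective on `(0,1) × ((0,∞) \ {1})`, i.e. the map fails to be
one-to-one only along `y₁ = 1`, where it is constant equal to `(2/3, 2/9, 1/9)`. -/
theorem g_injective_off_diagonal :
    Set.InjOn (fun q : ℝ × ℝ => g q.1 q.2)
        (Set.Ioo (0 : ℝ) 1 ×ˢ (Set.Ioi (0 : ℝ) \ {1})) ∧
      ∀ x₁ ∈ Set.Ioo (0 : ℝ) 1, g x₁ 1 = ![2/3, 2/9, 1/9] := by
  constructor
  · rintro ⟨u, v⟩ ⟨⟨hu0, hu1⟩, hv0, hv1⟩ ⟨w, z⟩ ⟨⟨hw0, hw1⟩, hz0, hz1⟩ hg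
    simp only [Set.mem_Ioi, Set.mem_singleton_iff] at hv0 hv1 hz0 hz1
    simp only at hg hu0 hu1 hw0 hw1
    have hS := sum_pos' hu0 hu1 hv0
    have hT := sum_pos' hw0 hw1 hz0
    have h0 := congrFun hg 0
    have h1 := congrFun hg 1
    have h2 := congrFun hg 2
    simp only [g, coalVec, Pi.smul_apply, smul_eq_mul, Matrix.cons_val_zero, Matrix.cons_val_one,
      Matrix.head_cons, Matrix.cons_val_two, Matrix.tail_cons] at h0 h1 h2
    rw [inv_mul_eq_div, inv_mul_eq_div, div_eq_div_iff hS.ne' hT.ne'] at h0 h1 h2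
    -- abbreviations for the two ℓ¹-sums
    set S := v * (1 - u) + u + (v * (1 - u ^ 3) + u ^ 3) / 3 + (v * (1 - u ^ 6) + u ^ 6) / 6 with hSdef
    set T := z * (1 - w) + w + (z * (1 - w ^ 3) + w ^ 3) / 3 + (z * (1 - w ^ 6) + w ^ 6) / 6 with hTdef
    have hA : (1 - v) * (u ^ 3 - u) * T = (1 - z) * (w ^ 3 - w) * S := by
      linear_combination 3 * h1 - h0
    have hB : (1 - v) * (u ^ 6 - u ^ 3) * T = (1 - z) * (w ^ 6 - w ^ 3) * S := by
      linear_combination 6 * h2 - 3 * h1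
    have hcross : ((u ^ 3 - u) * (w ^ 6 - w ^ 3) - (u ^ 6 - u ^ 3) * (w ^ 3 - w)) *
        ((1 - v) * (1 - z) * S * T) = 0 := by
      linear_combination ((1 - z) * (w ^ 6 - w ^ 3) * S) * hA - ((1 - z) * (w ^ 3 - w) * S) * hB
    have hk : (1 - v) * (1 - z) * S * T ≠ 0 :=
      mul_ne_zero (mul_ne_zero (mul_ne_zero (sub_ne_zero.mpr fun h => hv1 h.symm)
        (sub_ne_zero.mpr fun h => hz1 h.symm)) hS.ne') hT.ne'
    have hD : (u ^ 3 - u) * (w ^ 6 - w ^ 3) - (u ^ 6 - u ^ 3) * (w ^ 3 - w) = 0 :=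
      (mul_eq_zero.mp hcross).resolve_right hk
    have huw0 : (0:ℝ) ≤ u * w := (mul_pos hu0 hw0).le
    have hq1 : (0:ℝ) ≤ u ^ 2 + u * w + w ^ 2 :=
      add_nonneg (add_nonneg (sq_nonneg u) huw0) (sq_nonneg w)
    have hq2 : (0:ℝ) ≤ u ^ 3 + u ^ 2 * w + u * w ^ 2 + w ^ 3 :=
      add_nonneg (add_nonneg (add_nonneg (pow_nonneg hu0.le 3)
        (mul_nonneg (sq_nonneg u) hw0.le)) (mul_nonneg hu0.le (sq_nonneg w)))
        (pow_nonneg hw0.le 3)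
    have hq3 : (0:ℝ) ≤ u * w * (u ^ 2 + u * w + w ^ 2) := mul_nonneg huw0 hq1
    have hq4 : (0:ℝ) ≤ u * w * (u + w) := mul_nonneg huw0 (by linarith)
    have hQ : 0 < u * w * (u ^ 2 + u * w + w ^ 2) + (u ^ 3 + u ^ 2 * w + u * w ^ 2 + w ^ 3) +
        u * w * (u + w) + (u ^ 2 + u * w + w ^ 2) + u * w + (u + w) := by
      linarith
    have hM : 0 < u * w * ((1 - u) * ((1 - w) *
        (u * w * (u ^ 2 + u * w + w ^ 2) + (u ^ 3 + u ^ 2 * w + u * w ^ 2 + w ^ 3) +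
          u * w * (u + w) + (u ^ 2 + u * w + w ^ 2) + u * w + (u + w)))) :=
      mul_pos (mul_pos hu0 hw0) (mul_pos (by linarith) (mul_pos (by linarith) hQ))
    have hfac : (w - u) * (u * w * ((1 - u) * ((1 - w) *
        (u * w * (u ^ 2 + u * w + w ^ 2) + (u ^ 3 + u ^ 2 * w + u * w ^ 2 + w ^ 3) +
          u * w * (u + w) + (u ^ 2 + u * w + w ^ 2) + u * w + (u + w))))) = 0 := by
      linear_combination hD
    have huw : w = u := by
      have := (mul_eq_zero.mp hfac).resolve_right hM.ne'
      linarith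
    subst huw
    have h3u : w ^ 3 - w ≠ 0 := by nlinarith [pow_lt_one₀ hw0.le hw1 (three_ne_zero)]
    have hA' : (1 - v) * T = (1 - z) * S := by
      have hz0' : ((1 - v) * T - (1 - z) * S) * (w ^ 3 - w) = 0 := by linear_combination hA
      have := (mul_eq_zero.mp hz0').resolve_right h3u
      linarith
    have hTS : T = S := by linear_combination h0 + (1 - w) * hA'
    have hvz : (z - v) * S = 0 := by linear_combination hA' - (1 - v) * hTS
    have : z = v := by
      have := (mul_eq_zero.mp hvz).resolve_right hS.ne'
      linarith
    subst this
    rfl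
  · intro x hx
    funext i
    have hS : coalVec x 1 0 + coalVec x 1 1 + coalVec x 1 2 = 3/2 := by
      simp [coalVec]; ring
    fin_cases i <;>
      simp [g, hS, coalVec] <;> norm_num
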